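/- ‖U Σ (I_k − ΣᵀΣ)⁻¹ Vᵀ − Û Σ̂ (I_k − Σ̂ᵀΣ̂)⁻¹ V̂ᵀ‖ ≤ 3‖X − X̂‖ / (1 − ‖X‖² − 2‖X̂ − X‖)². (Equivalently, Σ(I_k − ΣᵀΣ)⁻¹ is the p×k rectangular diagonal matrix with diagonal entries σ_i/(1 − σ_i²), and similarly for Σ̂.) -/
import Mathlib

open Matrix

noncomputable def specNorm {m n : Type*} [Fintype m] [Fintype n] [DecidableEq n]
    (A : Matrix m n ℝ) : ℝ :=
  ‖LinearMap.toContinuousLinearMap (Matrix.toEuclideanLin A)‖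

noncomputable def vnorm {n : Type*} [Fintype n] (v : n → ℝ) : ℝ :=
  Real.sqrt (∑ i, v i ^ 2)

open scoped Matrix.Norms.L2Operator

lemma specNorm_eq_l2 {m n : Type*} [Fintype m] [Fintype n] [DecidableEq n]
    (A : Matrix m n ℝ) : specNorm A = ‖A‖ := rfl

lemma l2_norm_transpose {m n : Type*} [Fintype m] [Fintype n] [DecidableEq m] [DecidableEq n]
    (A : Matrix m n ℝ) : ‖Aᵀ‖ = ‖A‖ := by
  have h : Aᴴ = Aᵀ := by ext i j; simp [Matrix.conjTranspose_apply]
  rw [← h, Matrix.l2_opNorm_conjTranspose]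

lemma l2_norm_transpose_mul_self {m n : Type*} [Fintype m] [Fintype n] [DecidableEq n]
    (A : Matrix m n ℝ) : ‖Aᵀ * A‖ = ‖A‖ * ‖A‖ := by
  have h : Aᴴ = Aᵀ := by ext i j; simp [Matrix.conjTranspose_apply]
  rw [← h, Matrix.l2_opNorm_conjTranspose_mul_self]

lemma l2_norm_one_le (n : Type*) [Fintype n] [DecidableEq n] :
    ‖(1 : Matrix n n ℝ)‖ ≤ 1 := by
  rw [Matrix.cstar_norm_def, _root_.map_one, ContinuousLinearMap.one_def]
  exact ContinuousLinearMap.norm_id_le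

/-- Invertibility and inverse bound for `1 - M` when `‖M‖ < 1`. -/
lemma one_sub_inv_facts {n : Type*} [Fintype n] [DecidableEq n] (M : Matrix n n ℝ)
    (h : ‖M‖ < 1) :
    (1 - M) * (1 - M)⁻¹ = 1 ∧ (1 - M)⁻¹ * (1 - M) = 1 ∧ ‖(1 - M)⁻¹‖ ≤ (1 - ‖M‖)⁻¹ := by
  set φ := Matrix.toEuclideanCLM (𝕜 := ℝ) (n := n) with hφ
  have h' : ‖φ M‖ < 1 := by rw [← Matrix.cstar_norm_def]; exact h
  set u : (EuclideanSpace ℝ n →L[ℝ] EuclideanSpace ℝ n)ˣ := Units.oneSub (φ M) h' with hu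
  have huval : (u : EuclideanSpace ℝ n →L[ℝ] EuclideanSpace ℝ n) = φ (1 - M) := by
    rw [hu, Units.val_oneSub, _root_.map_sub, _root_.map_one]
  set B : Matrix n n ℝ := φ.symm ↑u⁻¹ with hB
  have hsymm_u : φ.symm ↑u = 1 - M := by rw [huval, StarAlgEquiv.symm_apply_apply]
  have h1 : (1 - M) * B = 1 := by
    have h := congrArg φ.symm u.mul_inv
    rwa [_root_.map_mul, _root_.map_one, hsymm_u, ← hB] at h
  have h2 : B * (1 - M) = 1 := by
    have h := congrArg φ.symm u.inv_mul
    rwa [_root_.map_mul, _root_.map_one, hsymm_u, ← hB] at h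
  have hinv : (1 - M)⁻¹ = B := Matrix.inv_eq_right_inv h1
  refine ⟨by rw [hinv]; exact h1, by rw [hinv]; exact h2, ?_⟩
  rw [hinv]
  -- B = 1 + B * M
  have hBeq : B = 1 + B * M := by
    have h := h2
    rw [Matrix.mul_sub, Matrix.mul_one] at h
    exact sub_eq_iff_eq_add.mp h
  have hnB : ‖B‖ ≤ 1 + ‖B‖ * ‖M‖ := by
    calc ‖B‖ = ‖(1 : Matrix n n ℝ) + B * M‖ := by rw [← hBeq]
    _ ≤ ‖(1 : Matrix n n ℝ)‖ + ‖B * M‖ := norm_add_le _ _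
    _ ≤ 1 + ‖B‖ * ‖M‖ := add_le_add (l2_norm_one_le n) (Matrix.l2_opNorm_mul _ _)
  have hM1 : 0 < 1 - ‖M‖ := by linarith
  rw [inv_eq_one_div, le_div_iff₀ hM1]
  nlinarith [norm_nonneg B, norm_nonneg M]

/-- SVD reduction: `U * (S * (1 - SᵀS)⁻¹) * Vᵀ = X * (1 - XᵀX)⁻¹`. -/
lemma svd_reduce {p k : ℕ} (X : Matrix (Fin p) (Fin k) ℝ)
    (U : Matrix (Fin p) (Fin p) ℝ) (V : Matrix (Fin k) (Fin k) ℝ)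
    (S : Matrix (Fin p) (Fin k) ℝ)
    (hU : Uᵀ * U = 1) (hV : Vᵀ * V = 1) (hSVD : X = U * S * Vᵀ) :
    U * (S * (1 - Sᵀ * S)⁻¹) * Vᵀ = X * (1 - Xᵀ * X)⁻¹ := by
  have hV' : V * Vᵀ = 1 := mul_eq_one_comm.mp hV
  have hXtX : 1 - Xᵀ * X = V * (1 - Sᵀ * S) * Vᵀ := by
    subst hSVD
    have h1 : (U * S * Vᵀ)ᵀ * (U * S * Vᵀ) = V * (Sᵀ * S) * Vᵀ := by
      rw [Matrix.transpose_mul, Matrix.transpose_mul, Matrix.transpose_transpose]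
      calc V * (Sᵀ * Uᵀ) * (U * S * Vᵀ)
          = V * (Sᵀ * (Uᵀ * U * (S * Vᵀ))) := by simp only [Matrix.mul_assoc]
        _ = V * (Sᵀ * S) * Vᵀ := by rw [hU, Matrix.one_mul]; simp only [Matrix.mul_assoc]
    rw [h1, Matrix.mul_sub, Matrix.sub_mul, Matrix.mul_one, hV']
  have hVinv : V⁻¹ = Vᵀ := Matrix.inv_eq_left_inv hV
  have hVtinv : Vᵀ⁻¹ = V := Matrix.inv_eq_left_inv hV'
  have hinv : (1 - Xᵀ * X)⁻¹ = V * ((1 - Sᵀ * S)⁻¹ * Vᵀ) := by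
    rw [hXtX, Matrix.mul_inv_rev, Matrix.mul_inv_rev, hVinv, hVtinv]
  rw [hinv, hSVD]
  symm
  calc U * S * Vᵀ * (V * ((1 - Sᵀ * S)⁻¹ * Vᵀ))
      = U * (S * (Vᵀ * V * ((1 - Sᵀ * S)⁻¹ * Vᵀ))) := by simp only [Matrix.mul_assoc]
    _ = U * (S * (1 - Sᵀ * S)⁻¹) * Vᵀ := by
        rw [hV, Matrix.one_mul]; simp only [Matrix.mul_assoc]

lemma key_id {p k : ℕ} (X Xh : Matrix (Fin p) (Fin k) ℝ) (A Ah B Bh : Matrix (Fin k) (Fin k) ℝ)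
    (hAB : A * B = 1) (hBhAh : Bh * Ah = 1) :
    X * B - Xh * Bh = (X - Xh) * B + Xh * (Bh * ((Ah - A) * B)) := by
  have hmid : Bh * ((Ah - A) * B) = B - Bh := by
    rw [Matrix.sub_mul, Matrix.mul_sub, ← Matrix.mul_assoc Bh Ah B, hBhAh, Matrix.one_mul,
      hAB, Matrix.mul_one]
  rw [hmid, Matrix.mul_sub, Matrix.sub_mul]
  abel

lemma arith_final (a b e nB nBh L : ℝ) (ha0 : 0 ≤ a) (hb0 : 0 ≤ b) (he0 : 0 ≤ e)
    (ha1 : a < 1) (hb1 : b < 1) (hbae : b ≤ a + e) (ht : a ^ 2 + 2 * e < 1)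
    (hnB0 : 0 ≤ nB) (hnBh0 : 0 ≤ nBh)
    (hnB : nB ≤ (1 - a * a)⁻¹) (hnBh : nBh ≤ (1 - b * b)⁻¹)
    (hL0 : 0 ≤ L)
    (hL : L ≤ e * nB + b * (nBh * ((a * e + e * b) * nB))) :
    L ≤ 3 * e / (1 - a ^ 2 - 2 * e) ^ 2 := by
  have hc0 : (0:ℝ) < 1 - a ^ 2 - 2 * e := by linarith
  set c : ℝ := 1 - a ^ 2 - 2 * e with hc
  have h2a : 0 ≤ 2 - 2 * a - e := by
    nlinarith [mul_nonneg (sub_nonneg.mpr ha1.le) (show (0:ℝ) ≤ 3 - a by linarith)]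
  have hb2 : b ^ 2 ≤ a ^ 2 + 2 * e := by
    nlinarith [mul_self_le_mul_self hb0 hbae, mul_nonneg he0 h2a]
  have ha2 : (0:ℝ) < 1 - a * a := by nlinarith
  have hb2' : (0:ℝ) < 1 - b * b := by nlinarith
  have hca : c ≤ 1 - a * a := by rw [hc]; nlinarith
  have hcb : c ≤ 1 - b * b := by rw [hc]; nlinarith
  have hiB : nB ≤ c⁻¹ := by
    refine hnB.trans ?_
    rw [inv_eq_one_div, inv_eq_one_div]
    exact one_div_le_one_div_of_le hc0 hca
  have hiBh : nBh ≤ c⁻¹ := by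
    refine hnBh.trans ?_
    rw [inv_eq_one_div, inv_eq_one_div]
    exact one_div_le_one_div_of_le hc0 hcb
  have hI : (0:ℝ) ≤ c⁻¹ := by positivity
  have hi1 : (1:ℝ) ≤ c⁻¹ := by
    rw [inv_eq_one_div, le_div_iff₀ hc0, one_mul, hc]; nlinarith
  have habe : a * e + e * b ≤ 2 * e := by
    nlinarith [mul_nonneg he0 (sub_nonneg.mpr ha1.le), mul_nonneg he0 (sub_nonneg.mpr hb1.le)]
  have habe0 : 0 ≤ a * e + e * b := by positivity
  calc L ≤ e * nB + b * (nBh * ((a * e + e * b) * nB)) := hL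
    _ ≤ e * c⁻¹ + 1 * (c⁻¹ * ((2 * e) * c⁻¹)) := by
        gcongr <;> first | assumption | positivity
    _ = e * c⁻¹ * 1 + 2 * e * (c⁻¹ * c⁻¹) := by ring
    _ ≤ e * c⁻¹ * c⁻¹ + 2 * e * (c⁻¹ * c⁻¹) := by
        have h := mul_le_mul_of_nonneg_left hi1 (mul_nonneg he0 hI)
        linarith
    _ = 3 * e / c ^ 2 := by rw [sq]; field_simp; ring

theorem stmt_18
    (p k : ℕ)
    (X Xh : Matrix (Fin p) (Fin k) ℝ)
    (U Uh : Matrix (Fin p) (Fin p) ℝ) (V Vh : Matrix (Fin k) (Fin k) ℝ)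
    (hU : Uᵀ * U = 1) (hV : Vᵀ * V = 1) (hUh : Uhᵀ * Uh = 1) (hVh : Vhᵀ * Vh = 1)
    (σ σh : ℕ → ℝ)
    (hσanti : ∀ i j, i ≤ j → σ j ≤ σ i) (hσnonneg : ∀ i, 0 ≤ σ i)
    (hσhanti : ∀ i j, i ≤ j → σh j ≤ σh i) (hσhnonneg : ∀ i, 0 ≤ σh i)
    (hSVD : X = U * (Matrix.of fun (i : Fin p) (j : Fin k) =>
        if (i : ℕ) = (j : ℕ) then σ (i : ℕ) else 0) * Vᵀ)
    (hSVDh : Xh = Uh * (Matrix.of fun (i : Fin p) (j : Fin k) =>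
        if (i : ℕ) = (j : ℕ) then σh (i : ℕ) else 0) * Vhᵀ)
    (hX1 : specNorm X < 1) (hXh1 : specNorm Xh < 1)
    (hsmall : specNorm X ^ 2 + 2 * specNorm (Xh - X) < 1) :
    specNorm
      (U * ((Matrix.of fun (i : Fin p) (j : Fin k) =>
              if (i : ℕ) = (j : ℕ) then σ (i : ℕ) else 0)
            * (1 - (Matrix.of fun (i : Fin p) (j : Fin k) =>
                if (i : ℕ) = (j : ℕ) then σ (i : ℕ) else 0)ᵀ
              * (Matrix.of fun (i : Fin p) (j : Fin k) =>
                if (i : ℕ) = (j : ℕ) then σ (i : ℕ) else 0))⁻¹) * Vᵀ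
      - Uh * ((Matrix.of fun (i : Fin p) (j : Fin k) =>
              if (i : ℕ) = (j : ℕ) then σh (i : ℕ) else 0)
            * (1 - (Matrix.of fun (i : Fin p) (j : Fin k) =>
                if (i : ℕ) = (j : ℕ) then σh (i : ℕ) else 0)ᵀ
              * (Matrix.of fun (i : Fin p) (j : Fin k) =>
                if (i : ℕ) = (j : ℕ) then σh (i : ℕ) else 0))⁻¹) * Vhᵀ)
      ≤ 3 * specNorm (X - Xh)
          / (1 - specNorm X ^ 2 - 2 * specNorm (Xh - X)) ^ 2 := by
  simp only [specNorm_eq_l2] at *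
  -- reduce the LHS matrix
  rw [svd_reduce X U V _ hU hV hSVD, svd_reduce Xh Uh Vh _ hUh hVh hSVDh]
  have ha0 : (0:ℝ) ≤ ‖X‖ := norm_nonneg _
  have hb0 : (0:ℝ) ≤ ‖Xh‖ := norm_nonneg _
  have he0 : (0:ℝ) ≤ ‖Xh - X‖ := norm_nonneg _
  have hXtX : ‖Xᵀ * X‖ < 1 := by
    rw [l2_norm_transpose_mul_self]; nlinarith
  have hXhtXh : ‖Xhᵀ * Xh‖ < 1 := by
    rw [l2_norm_transpose_mul_self]; nlinarith
  obtain ⟨hA1, hA2, hA3⟩ := one_sub_inv_facts (Xᵀ * X) hXtX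
  obtain ⟨hAh1, hAh2, hAh3⟩ := one_sub_inv_facts (Xhᵀ * Xh) hXhtXh
  rw [l2_norm_transpose_mul_self] at hA3 hAh3
  have hid := key_id X Xh (1 - Xᵀ * X) (1 - Xhᵀ * Xh) (1 - Xᵀ * X)⁻¹ (1 - Xhᵀ * Xh)⁻¹ hA1 hAh2
  rw [hid]
  have hAhA : (1 - Xhᵀ * Xh) - (1 - Xᵀ * X) = Xᵀ * (X - Xh) + (X - Xh)ᵀ * Xh := by
    rw [Matrix.transpose_sub, Matrix.mul_sub, Matrix.sub_mul]
    abel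
  have he' : ‖X - Xh‖ = ‖Xh - X‖ := norm_sub_rev _ _
  have hbound : ‖(X - Xh) * (1 - Xᵀ * X)⁻¹
      + Xh * ((1 - Xhᵀ * Xh)⁻¹ * (((1 - Xhᵀ * Xh) - (1 - Xᵀ * X)) * (1 - Xᵀ * X)⁻¹))‖
      ≤ ‖Xh - X‖ * ‖(1 - Xᵀ * X)⁻¹‖
      + ‖Xh‖ * (‖(1 - Xhᵀ * Xh)⁻¹‖ * ((‖X‖ * ‖Xh - X‖ + ‖Xh - X‖ * ‖Xh‖) * ‖(1 - Xᵀ * X)⁻¹‖)) := by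
    refine le_trans (norm_add_le _ _) (add_le_add ?_ ?_)
    · rw [← he']; exact Matrix.l2_opNorm_mul _ _
    · refine le_trans (Matrix.l2_opNorm_mul _ _) (mul_le_mul_of_nonneg_left ?_ hb0)
      refine le_trans (Matrix.l2_opNorm_mul _ _)
        (mul_le_mul_of_nonneg_left ?_ (norm_nonneg _))
      refine le_trans (Matrix.l2_opNorm_mul _ _)
        (mul_le_mul_of_nonneg_right ?_ (norm_nonneg _))
      rw [hAhA]
      refine le_trans (norm_add_le _ _) (add_le_add ?_ ?_)
      · refine le_trans (Matrix.l2_opNorm_mul _ _) ?_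
        rw [l2_norm_transpose, he']
      · refine le_trans (Matrix.l2_opNorm_mul _ _) ?_
        rw [l2_norm_transpose, he']
  have hbae : ‖Xh‖ ≤ ‖X‖ + ‖Xh - X‖ := by
    calc ‖Xh‖ = ‖X + (Xh - X)‖ := by rw [add_sub_cancel]
    _ ≤ ‖X‖ + ‖Xh - X‖ := norm_add_le _ _
  rw [he']
  exact arith_final ‖X‖ ‖Xh‖ ‖Xh - X‖ ‖(1 - Xᵀ * X)⁻¹‖ ‖(1 - Xhᵀ * Xh)⁻¹‖ _ ha0 hb0 he0
    hX1 hXh1 hbae hsmall (norm_nonneg _) (norm_nonneg _) hA3 hAh3 (norm_nonneg _) hbound
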